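/- arXiv:2602.02247 — 3 statements merged into one kernel-verified Lean document; each statement's English description precedes it below -/
import Mathlib

section
/- Let h, u_m, u_i : ℝ × ℝ → ℝ be C¹ functions satisfying the continuity equation ∂ₜ h + ∂ₓ(h·u_m) = 0 and the SWLME moment equation ∂ₜ(h·u_i) + ∂ₓ(2·h·u_m·u_i) = u_m·∂ₓ(h·u_i). Then the partial kinetic energy balance holds: ∂ₜ(h·u_i²/2) + ∂ₓ(h·u_m·u_i²/2) + h·u_i²·∂ₓ u_m = 0. -/
/-- Partial derivative with respect to time (first coordinate). -/
noncomputable def pt (f : ℝ × ℝ → ℝ) (t x : ℝ) : ℝ := deriv (fun s => f (s, x)) t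

/-- Partial derivative with respect to space (second coordinate). -/
noncomputable def px (f : ℝ × ℝ → ℝ) (t x : ℝ) : ℝ := deriv (fun y => f (t, y)) x

lemma sliceT (f : ℝ × ℝ → ℝ) (hf : ContDiff ℝ 1 f) (x t : ℝ) :
    DifferentiableAt ℝ (fun s => f (s, x)) t :=
  (hf.differentiable one_ne_zero (t, x)).comp t
    (differentiableAt_id.prodMk (differentiableAt_const x))

lemma sliceX (f : ℝ × ℝ → ℝ) (hf : ContDiff ℝ 1 f) (t x : ℝ) :
    DifferentiableAt ℝ (fun y => f (t, y)) x :=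
  (hf.differentiable one_ne_zero (t, x)).comp x
    ((differentiableAt_const t).prodMk differentiableAt_id)

theorem partial_kinetic_energy_balance
    (h um ui : ℝ × ℝ → ℝ)
    (hh : ContDiff ℝ 1 h) (hum : ContDiff ℝ 1 um) (hui : ContDiff ℝ 1 ui)
    (cont : ∀ t x : ℝ, pt h t x + px (fun p => h p * um p) t x = 0)
    (moment : ∀ t x : ℝ,
      pt (fun p => h p * ui p) t x + px (fun p => 2 * h p * um p * ui p) t x
        = um (t, x) * px (fun p => h p * ui p) t x) :
    ∀ t x : ℝ,
      pt (fun p => h p * (ui p) ^ 2 / 2) t x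
        + px (fun p => h p * um p * (ui p) ^ 2 / 2) t x
        + h (t, x) * (ui (t, x)) ^ 2 * px um t x = 0 := by
  intro t x
  have HhT : HasDerivAt (fun s => h (s, x)) (pt h t x) t :=
    (sliceT h hh x t).hasDerivAt
  have HumT : HasDerivAt (fun s => um (s, x)) (pt um t x) t :=
    (sliceT um hum x t).hasDerivAt
  have HuiT : HasDerivAt (fun s => ui (s, x)) (pt ui t x) t :=
    (sliceT ui hui x t).hasDerivAt
  have HhX : HasDerivAt (fun y => h (t, y)) (px h t x) x :=
    (sliceX h hh t x).hasDerivAt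
  have HumX : HasDerivAt (fun y => um (t, y)) (px um t x) x :=
    (sliceX um hum t x).hasDerivAt
  have HuiX : HasDerivAt (fun y => ui (t, y)) (px ui t x) x :=
    (sliceX ui hui t x).hasDerivAt
  -- expand cont
  have cont' : pt h t x + (px h t x * um (t, x) + h (t, x) * px um t x) = 0 := by
    have := (HhX.mul HumX).deriv
    have c := cont t x
    unfold px at *
    erw [this] at c
    linarith
  -- expand moment
  have moment' :
      (pt h t x * ui (t, x) + h (t, x) * pt ui t x)
        + (2 * (px h t x * um (t, x) * ui (t, x)
            + h (t, x) * px um t x * ui (t, x)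
            + h (t, x) * um (t, x) * px ui t x))
        = um (t, x) * (px h t x * ui (t, x) + h (t, x) * px ui t x) := by
    have e1 := (HhT.mul HuiT).deriv
    have e2 : deriv (fun y => 2 * h (t, y) * um (t, y) * ui (t, y)) x
        = 2 * (px h t x * um (t, x) * ui (t, x)
            + h (t, x) * px um t x * ui (t, x)
            + h (t, x) * um (t, x) * px ui t x) := by
      have := (((HhX.const_mul 2).mul HumX).mul HuiX).deriv
      erw [this]; simp only [Pi.mul_apply]; ring
    have e3 := (HhX.mul HuiX).deriv
    have m := moment t x
    unfold pt px at *
    erw [e1, e2, e3] at m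
    linarith [m]
  -- expand goal
  have g1 : pt (fun p => h p * (ui p) ^ 2 / 2) t x
      = (pt h t x * ui (t, x) ^ 2 + h (t, x) * (2 * ui (t, x) ^ 1 * pt ui t x)) / 2 := by
    have := ((HhT.mul (HuiT.pow 2)).div_const 2).deriv
    unfold pt at *
    simpa using this
  have g2 : px (fun p => h p * um p * (ui p) ^ 2 / 2) t x
      = ((px h t x * um (t, x) + h (t, x) * px um t x) * ui (t, x) ^ 2
          + h (t, x) * um (t, x) * (2 * ui (t, x) ^ 1 * px ui t x)) / 2 := by
    have := (((HhX.mul HumX).mul (HuiX.pow 2)).div_const 2).deriv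
    unfold px at *
    simpa using this
  rw [g1, g2]
  linear_combination (ui (t, x)) * moment' - (ui (t, x)) ^ 2 / 2 * cont'
end

section
/- Fix N ∈ ℕ. Let h, u_m, u_1, …, u_N : ℝ × ℝ → ℝ be C¹ functions with h > 0, g > 0, b : ℝ → ℝ C¹, satisfying: (C) ∂ₜ h + ∂ₓ(h·u_m) = 0; (M) ∂ₜ(h·u_m) + ∂ₓ( h·u_m² + h·∑_{j=1}^N u_j²/(2j+1) + g·h²/2 ) = −g·h·∂ₓ b; and for each i, (u_i) ∂ₜ(h·u_i) + ∂ₓ(2·h·u_m·u_i) = u_m·∂ₓ(h·u_i). Then the total energy equation holds: ∂ₜ( h·u_m²/2 + (h/2)·∑_{i=1}^N u_i²/(2i+1) + g·h²/2 + g·h·b ) + ∂ₓ( h·u_m³/2 + (3·h·u_m/2)·∑_{i=1}^N u_i²/(2i+1) + g·h·u_m·(h+b) ) = 0. -/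
theorem swlme_total_energy_equation (N : ℕ)
    (h um : ℝ × ℝ → ℝ) (u : Fin N → ℝ × ℝ → ℝ) (b : ℝ → ℝ) (g : ℝ)
    (hh : ContDiff ℝ 1 h) (hum : ContDiff ℝ 1 um) (hu : ∀ i, ContDiff ℝ 1 (u i))
    (hb : ContDiff ℝ 1 b) (hpos : ∀ p, 0 < h p) (hg : 0 < g)
    (cont : ∀ t x : ℝ, pt h t x + px (fun p => h p * um p) t x = 0)
    (mom : ∀ t x : ℝ,
      pt (fun p => h p * um p) t x
        + px (fun p => h p * (um p) ^ 2
            + h p * ∑ j : Fin N, (u j p) ^ 2 / (2 * ((j : ℕ) + 1) + 1)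
            + g * (h p) ^ 2 / 2) t x
      = -(g * h (t, x) * deriv b x))
    (moment : ∀ i : Fin N, ∀ t x : ℝ,
      pt (fun p => h p * u i p) t x + px (fun p => 2 * h p * um p * u i p) t x
        = um (t, x) * px (fun p => h p * u i p) t x) :
    ∀ t x : ℝ,
      pt (fun p => h p * (um p) ^ 2 / 2
          + (h p / 2) * ∑ i : Fin N, (u i p) ^ 2 / (2 * ((i : ℕ) + 1) + 1)
          + g * (h p) ^ 2 / 2 + g * h p * b p.2) t x
        + px (fun p => h p * (um p) ^ 3 / 2
          + (3 * h p * um p / 2) * ∑ i : Fin N, (u i p) ^ 2 / (2 * ((i : ℕ) + 1) + 1)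
          + g * h p * um p * (h p + b p.2)) t x = 0 := by
  intro t x
  -- slice differentiability
  have sliceT : ∀ (f : ℝ × ℝ → ℝ), ContDiff ℝ 1 f →
      HasDerivAt (fun s => f (s, x)) (pt f t x) t := by
    intro f hf
    have : DifferentiableAt ℝ (fun s => f (s, x)) t :=
      (hf.differentiable one_ne_zero (t, x)).comp t
        (differentiableAt_id.prodMk (differentiableAt_const x))
    exact this.hasDerivAt
  have sliceX : ∀ (f : ℝ × ℝ → ℝ), ContDiff ℝ 1 f →
      HasDerivAt (fun y => f (t, y)) (px f t x) x := by
    intro f hf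
    have : DifferentiableAt ℝ (fun y => f (t, y)) x :=
      (hf.differentiable one_ne_zero (t, x)).comp x
        ((differentiableAt_const t).prodMk differentiableAt_id)
    exact this.hasDerivAt
  -- notation
  set H := h (t, x) with hH
  set U := um (t, x) with hU
  set P := pt h t x with hP
  set Q := px h t x with hQ
  set A := pt um t x with hA
  set C := px um t x with hC
  set D := deriv b x with hD
  set V : Fin N → ℝ := fun i => u i (t, x) with hV
  set Vt : Fin N → ℝ := fun i => pt (u i) t x with hVt
  set Vx : Fin N → ℝ := fun i => px (u i) t x with hVx
  set w : Fin N → ℝ := fun i => 2 * ((i : ℕ) + 1) + 1 with hw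
  have hwne : ∀ i : Fin N, w i ≠ 0 := by
    intro i
    have : (0:ℝ) < 2 * ((i : ℕ) + 1) + 1 := by positivity
    simpa [hw] using this.ne'
  have Dht : HasDerivAt (fun s => h (s, x)) P t := sliceT h hh
  have Dhx : HasDerivAt (fun y => h (t, y)) Q x := sliceX h hh
  have Dut : HasDerivAt (fun s => um (s, x)) A t := sliceT um hum
  have Dux : HasDerivAt (fun y => um (t, y)) C x := sliceX um hum
  have Dit : ∀ i, HasDerivAt (fun s => u i (s, x)) (Vt i) t := fun i => sliceT (u i) (hu i)
  have Dix : ∀ i, HasDerivAt (fun y => u i (t, y)) (Vx i) x := fun i => sliceX (u i) (hu i)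
  have Dbx : HasDerivAt b D x := (hb.differentiable one_ne_zero x).hasDerivAt
  -- sums
  set S := ∑ i : Fin N, V i ^ 2 / w i with hS
  set T1 := ∑ i : Fin N, V i * Vt i / w i with hT1
  set T2 := ∑ i : Fin N, V i * Vx i / w i with hT2
  have DSt : HasDerivAt (fun s => ∑ i : Fin N, (u i (s, x)) ^ 2 / (2 * ((i : ℕ) + 1) + 1))
      (2 * T1) t := by
    have per : ∀ i ∈ (Finset.univ : Finset (Fin N)),
        HasDerivAt (fun s => (u i (s, x)) ^ 2 / (2 * ((i : ℕ) + 1) + 1))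
          (2 * (V i * Vt i / w i)) t := by
      intro i _
      have hd := ((Dit i).pow 2).div_const (2 * ((i : ℕ) + 1) + 1)
      refine hd.congr_deriv ?_
      simp only [hV, hVt, hw]
      push_cast [pow_one]
      try ring
    have hsum := HasDerivAt.fun_sum per
    refine hsum.congr_deriv ?_
    rw [hT1, Finset.mul_sum]
  have DSx : HasDerivAt (fun y => ∑ i : Fin N, (u i (t, y)) ^ 2 / (2 * ((i : ℕ) + 1) + 1))
      (2 * T2) x := by
    have per : ∀ i ∈ (Finset.univ : Finset (Fin N)),
        HasDerivAt (fun y => (u i (t, y)) ^ 2 / (2 * ((i : ℕ) + 1) + 1))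
          (2 * (V i * Vx i / w i)) x := by
      intro i _
      have hd := ((Dix i).pow 2).div_const (2 * ((i : ℕ) + 1) + 1)
      refine hd.congr_deriv ?_
      simp only [hV, hVx, hw]
      push_cast [pow_one]
      try ring
    have hsum := HasDerivAt.fun_sum per
    refine hsum.congr_deriv ?_
    rw [hT2, Finset.mul_sum]
  have hSval : (∑ i : Fin N, (u i (t, x)) ^ 2 / (2 * ((i : ℕ) + 1) + 1)) = S := by
    rw [hS]
  -- rewrite continuity equation
  have Econt : P + (Q * U + H * C) = 0 := by
    have e : px (fun p => h p * um p) t x = Q * U + H * C := (Dhx.mul Dux).deriv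
    have := cont t x
    rw [e] at this
    exact this
  -- rewrite momentum equation
  have Emom : P * U + H * A + (Q * U ^ 2 + H * (2 * U * C) + (Q * S + H * (2 * T2))
      + g * (2 * H * Q) / 2) = -(g * H * D) := by
    have e1 : pt (fun p => h p * um p) t x = P * U + H * A := (Dht.mul Dut).deriv
    have e2 : px (fun p => h p * (um p) ^ 2
        + h p * ∑ j : Fin N, (u j p) ^ 2 / (2 * ((j : ℕ) + 1) + 1)
        + g * (h p) ^ 2 / 2) t x
        = (Q * U ^ 2 + H * ((2:ℕ) * U ^ 1 * C)) + (Q * (∑ i : Fin N, (u i (t, x)) ^ 2 / (2 * ((i : ℕ) + 1) + 1)) + H * (2 * T2))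
          + g * ((2:ℕ) * H ^ 1 * Q) / 2 :=
      (((Dhx.mul (Dux.pow 2)).add (Dhx.mul DSx)).add (((Dhx.pow 2).const_mul g).div_const 2)).deriv
    have := mom t x
    rw [e1, e2, hSval] at this
    push_cast [pow_one] at this
    linear_combination this
  -- rewrite moment equations, weighted key identity
  have Ekey : H * T1 + P * S + Q * U * S + 2 * H * C * S + H * U * T2 = 0 := by
    have per : ∀ i : Fin N,
        H * (V i * Vt i / w i) + P * (V i ^ 2 / w i) + Q * U * (V i ^ 2 / w i)
          + 2 * H * C * (V i ^ 2 / w i) + H * U * (V i * Vx i / w i) = 0 := by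
      intro i
      have e1 : pt (fun p => h p * u i p) t x = P * V i + H * Vt i := (Dht.mul (Dit i)).deriv
      have e2 : px (fun p => 2 * h p * um p * u i p) t x
          = ((2 * Q) * U + (2 * H) * C) * V i + (2 * H * U) * Vx i :=
        (((Dhx.const_mul 2).mul Dux).mul (Dix i)).deriv
      have e3 : px (fun p => h p * u i p) t x = Q * V i + H * Vx i := (Dhx.mul (Dix i)).deriv
      have em := moment i t x
      rw [e1, e2, e3] at em
      have hwi := hwne i
      field_simp
      linear_combination (V i) * em
    calc H * T1 + P * S + Q * U * S + 2 * H * C * S + H * U * T2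
        = ∑ i : Fin N, (H * (V i * Vt i / w i) + P * (V i ^ 2 / w i)
            + Q * U * (V i ^ 2 / w i) + 2 * H * C * (V i ^ 2 / w i)
            + H * U * (V i * Vx i / w i)) := by
          rw [hT1, hS, hT2, Finset.mul_sum, Finset.mul_sum, Finset.mul_sum,
            Finset.mul_sum, Finset.mul_sum]
          rw [← Finset.sum_add_distrib, ← Finset.sum_add_distrib,
            ← Finset.sum_add_distrib, ← Finset.sum_add_distrib]
      _ = 0 := Finset.sum_eq_zero fun i _ => per i
  -- rewrite the goal
  have g1 : pt (fun p => h p * (um p) ^ 2 / 2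
      + (h p / 2) * ∑ i : Fin N, (u i p) ^ 2 / (2 * ((i : ℕ) + 1) + 1)
      + g * (h p) ^ 2 / 2 + g * h p * b p.2) t x
      = (P * U ^ 2 + H * ((2:ℕ) * U ^ 1 * A)) / 2
        + ((P / 2) * (∑ i : Fin N, (u i (t, x)) ^ 2 / (2 * ((i : ℕ) + 1) + 1)) + (H / 2) * (2 * T1))
        + g * ((2:ℕ) * H ^ 1 * P) / 2
        + ((g * P) * b x + (g * H) * 0) :=
    (((((Dht.mul (Dut.pow 2)).div_const 2).add ((Dht.div_const 2).mul DSt)).add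
      (((Dht.pow 2).const_mul g).div_const 2)).add
      ((Dht.const_mul g).mul (hasDerivAt_const t (b x)))).deriv
  have g2 : px (fun p => h p * (um p) ^ 3 / 2
      + (3 * h p * um p / 2) * ∑ i : Fin N, (u i p) ^ 2 / (2 * ((i : ℕ) + 1) + 1)
      + g * h p * um p * (h p + b p.2)) t x
      = (Q * U ^ 3 + H * ((3:ℕ) * U ^ 2 * C)) / 2
        + ((((3 * Q) * U + (3 * H) * C) / 2) * (∑ i : Fin N, (u i (t, x)) ^ 2 / (2 * ((i : ℕ) + 1) + 1))
            + (3 * H * U / 2) * (2 * T2))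
        + (((g * Q) * U + (g * H) * C) * (H + b x) + (g * H * U) * (Q + D)) :=
    ((((Dhx.mul (Dux.pow 3)).div_const 2).add
      ((((Dhx.const_mul 3).mul Dux).div_const 2).mul DSx)).add
      (((Dhx.const_mul g).mul Dux).mul (Dhx.add Dbx))).deriv
  rw [g1, g2, hSval]
  push_cast [pow_one]
  linear_combination U * Emom + Ekey + (-(U ^ 2) / 2 - S / 2 + g * H + g * (b x)) * Econt
end

section
/- Let the entropy variables be q₁ = −u_m²/2 − (1/2)∑_{i=1}^N u_i²/(2i+1) + g(h+b), q₂ = u_m, q_{u_i} = u_i/(2i+1). If h, u_m, u_i are C¹ solutions of the SWLME system (C), (M), (u_i), then the linear combination q₁·(C) + q₂·(M) + ∑_{i=1}^N q_{u_i}·(u_i) equals the total energy equation ∂ₜ e + ∂ₓ f = 0 with e = h u_m²/2 + (h/2)∑ u_i²/(2i+1) + g h²/2 + g h b and f = h u_m³/2 + (3 h u_m/2)∑ u_i²/(2i+1) + g h u_m (h+b). -/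
theorem swlme_entropy_contraction (N : ℕ)
    (h um : ℝ × ℝ → ℝ) (u : Fin N → ℝ × ℝ → ℝ) (b : ℝ → ℝ) (g : ℝ)
    (hh : ContDiff ℝ 1 h) (hum : ContDiff ℝ 1 um) (hu : ∀ i, ContDiff ℝ 1 (u i))
    (hb : ContDiff ℝ 1 b) (hpos : ∀ p, 0 < h p) (hg : 0 < g)
    (cont : ∀ t x : ℝ, pt h t x + px (fun p => h p * um p) t x = 0)
    (mom : ∀ t x : ℝ,
      pt (fun p => h p * um p) t x
        + px (fun p => h p * (um p) ^ 2
            + h p * ∑ j : Fin N, (u j p) ^ 2 / (2 * ((j : ℕ) + 1) + 1)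
            + g * (h p) ^ 2 / 2) t x
      = -(g * h (t, x) * deriv b x))
    (moment : ∀ i : Fin N, ∀ t x : ℝ,
      pt (fun p => h p * u i p) t x + px (fun p => 2 * h p * um p * u i p) t x
        = um (t, x) * px (fun p => h p * u i p) t x) :
    ∀ t x : ℝ,
      (-(um (t, x)) ^ 2 / 2
          - (1 / 2) * ∑ i : Fin N, (u i (t, x)) ^ 2 / (2 * ((i : ℕ) + 1) + 1)
          + g * (h (t, x) + b x))
        * (pt h t x + px (fun p => h p * um p) t x)
      + um (t, x)
        * (pt (fun p => h p * um p) t x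
            + px (fun p => h p * (um p) ^ 2
                + h p * ∑ j : Fin N, (u j p) ^ 2 / (2 * ((j : ℕ) + 1) + 1)
                + g * (h p) ^ 2 / 2) t x
            + g * h (t, x) * deriv b x)
      + ∑ i : Fin N, (u i (t, x) / (2 * ((i : ℕ) + 1) + 1))
          * (pt (fun p => h p * u i p) t x + px (fun p => 2 * h p * um p * u i p) t x
              - um (t, x) * px (fun p => h p * u i p) t x)
      = pt (fun p => h p * (um p) ^ 2 / 2
            + (h p / 2) * ∑ i : Fin N, (u i p) ^ 2 / (2 * ((i : ℕ) + 1) + 1)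
            + g * (h p) ^ 2 / 2 + g * h p * b p.2) t x
        + px (fun p => h p * (um p) ^ 3 / 2
            + (3 * h p * um p / 2) * ∑ i : Fin N, (u i p) ^ 2 / (2 * ((i : ℕ) + 1) + 1)
            + g * h p * um p * (h p + b p.2)) t x
      ∧ pt (fun p => h p * (um p) ^ 2 / 2
            + (h p / 2) * ∑ i : Fin N, (u i p) ^ 2 / (2 * ((i : ℕ) + 1) + 1)
            + g * (h p) ^ 2 / 2 + g * h p * b p.2) t x
        + px (fun p => h p * (um p) ^ 3 / 2
            + (3 * h p * um p / 2) * ∑ i : Fin N, (u i p) ^ 2 / (2 * ((i : ℕ) + 1) + 1)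
            + g * h p * um p * (h p + b p.2)) t x = 0 := by
  intro t x
  have hdh := hh.differentiable one_ne_zero
  have hdum := hum.differentiable one_ne_zero
  have hdu : ∀ i, Differentiable ℝ (u i) := fun i => (hu i).differentiable one_ne_zero
  have hdb := hb.differentiable one_ne_zero
  have keyT : ∀ (f : ℝ × ℝ → ℝ), Differentiable ℝ f →
      HasDerivAt (fun s => f (s, x)) (pt f t x) t := by
    intro f hf
    have : DifferentiableAt ℝ (fun s => f (s, x)) t :=
      (hf (t, x)).comp t (differentiableAt_id.prodMk (differentiableAt_const x))
    exact this.hasDerivAt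
  have keyX : ∀ (f : ℝ × ℝ → ℝ), Differentiable ℝ f →
      HasDerivAt (fun y => f (t, y)) (px f t x) x := by
    intro f hf
    have : DifferentiableAt ℝ (fun y => f (t, y)) x :=
      (hf (t, x)).comp x ((differentiableAt_const t).prodMk differentiableAt_id)
    exact this.hasDerivAt
  have Ht := keyT h hdh
  have Hx := keyX h hdh
  have Ut := keyT um hdum
  have Ux := keyX um hdum
  have uT : ∀ i, HasDerivAt (fun s => u i (s, x)) (pt (u i) t x) t :=
    fun i => keyT _ (hdu i)
  have uX : ∀ i, HasDerivAt (fun y => u i (t, y)) (px (u i) t x) x :=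
    fun i => keyX _ (hdu i)
  have Bx : HasDerivAt (fun y => b y) (deriv b x) x := (hdb x).hasDerivAt
  -- squared / cubed slices with clean values
  have Usqt : HasDerivAt (fun s => um (s, x) ^ 2) (2 * um (t, x) * pt um t x) t := by
    simpa using Ut.fun_pow 2
  have Usqx : HasDerivAt (fun y => um (t, y) ^ 2) (2 * um (t, x) * px um t x) x := by
    simpa using Ux.fun_pow 2
  have Ucbx : HasDerivAt (fun y => um (t, y) ^ 3) (3 * um (t, x) ^ 2 * px um t x) x := by
    simpa using Ux.fun_pow 3
  have Hsqt : HasDerivAt (fun s => h (s, x) ^ 2) (2 * h (t, x) * pt h t x) t := by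
    simpa using Ht.fun_pow 2
  have Hsqx : HasDerivAt (fun y => h (t, y) ^ 2) (2 * h (t, x) * px h t x) x := by
    simpa using Hx.fun_pow 2
  have usqT : ∀ i, HasDerivAt (fun s => u i (s, x) ^ 2)
      (2 * u i (t, x) * pt (u i) t x) t := fun i => by simpa using (uT i).fun_pow 2
  have usqX : ∀ i, HasDerivAt (fun y => u i (t, y) ^ 2)
      (2 * u i (t, x) * px (u i) t x) x := fun i => by simpa using (uX i).fun_pow 2
  -- sum slices
  have STder : HasDerivAt (fun s => ∑ j : Fin N, (u j (s, x)) ^ 2 / (2 * ((j : ℕ) + 1) + 1))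
      (∑ j : Fin N, 2 * u j (t, x) * pt (u j) t x / (2 * ((j : ℕ) + 1) + 1)) t :=
    HasDerivAt.fun_sum fun j _ => (usqT j).div_const _
  have SXder : HasDerivAt (fun y => ∑ j : Fin N, (u j (t, y)) ^ 2 / (2 * ((j : ℕ) + 1) + 1))
      (∑ j : Fin N, 2 * u j (t, x) * px (u j) t x / (2 * ((j : ℕ) + 1) + 1)) x :=
    HasDerivAt.fun_sum fun j _ => (usqX j).div_const _
  -- clean derivative equalities
  have E1 : px (fun p => h p * um p) t x
      = px h t x * um (t, x) + h (t, x) * px um t x := (Hx.mul Ux).deriv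
  have E2 : pt (fun p => h p * um p) t x
      = pt h t x * um (t, x) + h (t, x) * pt um t x := (Ht.mul Ut).deriv
  have E3 : ∀ i, pt (fun p => h p * u i p) t x
      = pt h t x * u i (t, x) + h (t, x) * pt (u i) t x :=
    fun i => (Ht.mul (uT i)).deriv
  have E4 : ∀ i, px (fun p => h p * u i p) t x
      = px h t x * u i (t, x) + h (t, x) * px (u i) t x :=
    fun i => (Hx.mul (uX i)).deriv
  have E5 : ∀ i, px (fun p => 2 * h p * um p * u i p) t x
      = 2 * px h t x * um (t, x) * u i (t, x) + 2 * h (t, x) * px um t x * u i (t, x)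
        + 2 * h (t, x) * um (t, x) * px (u i) t x :=
    fun i => (((Hx.const_mul 2).fun_mul Ux).fun_mul (uX i)).deriv.trans (by ring)
  have E6 : px (fun p => h p * (um p) ^ 2
        + h p * ∑ j : Fin N, (u j p) ^ 2 / (2 * ((j : ℕ) + 1) + 1)
        + g * (h p) ^ 2 / 2) t x
      = px h t x * um (t, x) ^ 2 + 2 * h (t, x) * um (t, x) * px um t x
        + px h t x * (∑ j : Fin N, (u j (t, x)) ^ 2 / (2 * ((j : ℕ) + 1) + 1))
        + h (t, x) * (∑ j : Fin N, 2 * u j (t, x) * px (u j) t x / (2 * ((j : ℕ) + 1) + 1))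
        + g * h (t, x) * px h t x :=
    (((Hx.mul Usqx).add (Hx.mul SXder)).add ((Hsqx.const_mul g).div_const 2)).deriv.trans
      (by ring)
  have E7 : pt (fun p => h p * (um p) ^ 2 / 2
        + (h p / 2) * ∑ i : Fin N, (u i p) ^ 2 / (2 * ((i : ℕ) + 1) + 1)
        + g * (h p) ^ 2 / 2 + g * h p * b p.2) t x
      = pt h t x * um (t, x) ^ 2 / 2 + h (t, x) * um (t, x) * pt um t x
        + (pt h t x / 2) * (∑ j : Fin N, (u j (t, x)) ^ 2 / (2 * ((j : ℕ) + 1) + 1))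
        + (h (t, x) / 2) * (∑ j : Fin N, 2 * u j (t, x) * pt (u j) t x / (2 * ((j : ℕ) + 1) + 1))
        + g * h (t, x) * pt h t x + g * pt h t x * b x :=
    (((((Ht.mul Usqt).div_const 2).add ((Ht.div_const 2).mul STder)).add
      ((Hsqt.const_mul g).div_const 2)).add ((Ht.const_mul g).mul_const (b x))).deriv.trans
      (by ring)
  have E8 : px (fun p => h p * (um p) ^ 3 / 2
        + (3 * h p * um p / 2) * ∑ i : Fin N, (u i p) ^ 2 / (2 * ((i : ℕ) + 1) + 1)
        + g * h p * um p * (h p + b p.2)) t x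
      = px h t x * um (t, x) ^ 3 / 2 + 3 * h (t, x) * um (t, x) ^ 2 * px um t x / 2
        + (3 * px h t x * um (t, x) / 2 + 3 * h (t, x) * px um t x / 2)
          * (∑ j : Fin N, (u j (t, x)) ^ 2 / (2 * ((j : ℕ) + 1) + 1))
        + (3 * h (t, x) * um (t, x) / 2)
          * (∑ j : Fin N, 2 * u j (t, x) * px (u j) t x / (2 * ((j : ℕ) + 1) + 1))
        + g * (px h t x * um (t, x) + h (t, x) * px um t x) * (h (t, x) + b x)
        + g * h (t, x) * um (t, x) * (px h t x + deriv b x) :=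
    ((((Hx.fun_mul Ucbx).div_const 2).add
        ((((Hx.const_mul 3).fun_mul Ux).div_const 2).mul SXder)).add
      (((Hx.const_mul g).fun_mul Ux).fun_mul (Hx.fun_add Bx))).deriv.trans (by ring)
  -- the contracted sum
  have KS : (∑ i : Fin N, (u i (t, x) / (2 * ((i : ℕ) + 1) + 1))
        * (pt (fun p => h p * u i p) t x + px (fun p => 2 * h p * um p * u i p) t x
            - um (t, x) * px (fun p => h p * u i p) t x))
      = pt h t x * (∑ i : Fin N, (u i (t, x)) ^ 2 / (2 * ((i : ℕ) + 1) + 1))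
        + (h (t, x) / 2) * (∑ i : Fin N, 2 * u i (t, x) * pt (u i) t x / (2 * ((i : ℕ) + 1) + 1))
        + px h t x * um (t, x) * (∑ i : Fin N, (u i (t, x)) ^ 2 / (2 * ((i : ℕ) + 1) + 1))
        + 2 * h (t, x) * px um t x * (∑ i : Fin N, (u i (t, x)) ^ 2 / (2 * ((i : ℕ) + 1) + 1))
        + (h (t, x) * um (t, x) / 2)
          * (∑ i : Fin N, 2 * u i (t, x) * px (u i) t x / (2 * ((i : ℕ) + 1) + 1)) := by
    have h1 : (∑ i : Fin N, (u i (t, x) / (2 * ((i : ℕ) + 1) + 1))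
          * (pt (fun p => h p * u i p) t x + px (fun p => 2 * h p * um p * u i p) t x
              - um (t, x) * px (fun p => h p * u i p) t x))
        = ∑ i : Fin N,
            (pt h t x * ((u i (t, x)) ^ 2 / (2 * ((i : ℕ) + 1) + 1))
            + (h (t, x) / 2) * (2 * u i (t, x) * pt (u i) t x / (2 * ((i : ℕ) + 1) + 1))
            + px h t x * um (t, x) * ((u i (t, x)) ^ 2 / (2 * ((i : ℕ) + 1) + 1))
            + 2 * h (t, x) * px um t x * ((u i (t, x)) ^ 2 / (2 * ((i : ℕ) + 1) + 1))
            + (h (t, x) * um (t, x) / 2)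
              * (2 * u i (t, x) * px (u i) t x / (2 * ((i : ℕ) + 1) + 1))) :=
      Finset.sum_congr rfl fun i _ => by rw [E3 i, E4 i, E5 i]; ring
    rw [h1]
    simp only [Finset.sum_add_distrib, ← Finset.mul_sum]
  -- part 1: the contraction equals ∂ₜ e + ∂ₓ f
  have main :
      (-(um (t, x)) ^ 2 / 2
          - (1 / 2) * ∑ i : Fin N, (u i (t, x)) ^ 2 / (2 * ((i : ℕ) + 1) + 1)
          + g * (h (t, x) + b x))
        * (pt h t x + px (fun p => h p * um p) t x)
      + um (t, x)
        * (pt (fun p => h p * um p) t x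
            + px (fun p => h p * (um p) ^ 2
                + h p * ∑ j : Fin N, (u j p) ^ 2 / (2 * ((j : ℕ) + 1) + 1)
                + g * (h p) ^ 2 / 2) t x
            + g * h (t, x) * deriv b x)
      + ∑ i : Fin N, (u i (t, x) / (2 * ((i : ℕ) + 1) + 1))
          * (pt (fun p => h p * u i p) t x + px (fun p => 2 * h p * um p * u i p) t x
              - um (t, x) * px (fun p => h p * u i p) t x)
      = pt (fun p => h p * (um p) ^ 2 / 2
            + (h p / 2) * ∑ i : Fin N, (u i p) ^ 2 / (2 * ((i : ℕ) + 1) + 1)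
            + g * (h p) ^ 2 / 2 + g * h p * b p.2) t x
        + px (fun p => h p * (um p) ^ 3 / 2
            + (3 * h p * um p / 2) * ∑ i : Fin N, (u i p) ^ 2 / (2 * ((i : ℕ) + 1) + 1)
            + g * h p * um p * (h p + b p.2)) t x := by
    rw [KS, E1, E2, E6, E7, E8]
    have hcons := cont t x
    rw [E1] at hcons
    -- use continuity to eliminate pt h
    have hpt : pt h t x = -(px h t x * um (t, x) + h (t, x) * px um t x) := by linarith
    rw [hpt]; ring
  -- part 2: the contraction is zero
  have zero :
      (-(um (t, x)) ^ 2 / 2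
          - (1 / 2) * ∑ i : Fin N, (u i (t, x)) ^ 2 / (2 * ((i : ℕ) + 1) + 1)
          + g * (h (t, x) + b x))
        * (pt h t x + px (fun p => h p * um p) t x)
      + um (t, x)
        * (pt (fun p => h p * um p) t x
            + px (fun p => h p * (um p) ^ 2
                + h p * ∑ j : Fin N, (u j p) ^ 2 / (2 * ((j : ℕ) + 1) + 1)
                + g * (h p) ^ 2 / 2) t x
            + g * h (t, x) * deriv b x)
      + ∑ i : Fin N, (u i (t, x) / (2 * ((i : ℕ) + 1) + 1))
          * (pt (fun p => h p * u i p) t x + px (fun p => 2 * h p * um p * u i p) t x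
              - um (t, x) * px (fun p => h p * u i p) t x) = 0 := by
    have h1 := cont t x
    have h2 := mom t x
    have h2' : pt (fun p => h p * um p) t x
        + px (fun p => h p * (um p) ^ 2
            + h p * ∑ j : Fin N, (u j p) ^ 2 / (2 * ((j : ℕ) + 1) + 1)
            + g * (h p) ^ 2 / 2) t x
        + g * h (t, x) * deriv b x = 0 := by rw [h2]; ring
    have hs : (∑ i : Fin N, (u i (t, x) / (2 * ((i : ℕ) + 1) + 1))
        * (pt (fun p => h p * u i p) t x + px (fun p => 2 * h p * um p * u i p) t x
            - um (t, x) * px (fun p => h p * u i p) t x)) = 0 :=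
      Finset.sum_eq_zero fun i _ => by
        have := moment i t x
        have hz : pt (fun p => h p * u i p) t x + px (fun p => 2 * h p * um p * u i p) t x
            - um (t, x) * px (fun p => h p * u i p) t x = 0 := by linarith
        rw [hz, mul_zero]
    rw [h1, h2', hs]
    ring
  exact ⟨main, by rw [← main]; exact zero⟩
end
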